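/- For m×m Hermitian positive definite matrices P and Q, the function D(P,Q) := tr(PQ^{-1} − log(PQ^{-1}) − I) is nonnegative, and equals zero if and only if P = Q. -/

import Mathlib

open Matrix
open scoped ComplexOrder

lemma trace_eq_sum_eigs {n : Type*} [Fintype n] [DecidableEq n] {A : Matrix n n ℂ}
    (hA : A.IsHermitian) : A.trace = ∑ i, (hA.eigenvalues i : ℂ) := by
  conv_lhs => rw [hA.spectral_theorem, Unitary.conjStarAlgAut_apply]
  rw [Matrix.trace_mul_cycle,
    (Matrix.mem_unitaryGroup_iff').mp (hA.eigenvectorUnitary).2, one_mul, trace_diagonal]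
  simp

lemma posdef_conj {n : Type*} [Fintype n] [DecidableEq n] {P R : Matrix n n ℂ}
    (hP : P.PosDef) (hR : R.IsHermitian) (hRdet : R.det ≠ 0) : (R * P * R).PosDef := by
  refine Matrix.PosDef.of_dotProduct_mulVec_pos ?_ ?_
  · show (R * P * R)ᴴ = R * P * R
    simp [Matrix.conjTranspose_mul, hP.isHermitian.eq, hR.eq, mul_assoc]
  · intro x hx
    have hRx : R *ᵥ x ≠ 0 := by
      intro h
      apply hx
      have := congrArg (fun v => R⁻¹ *ᵥ v) h
      simpa [Matrix.mulVec_mulVec, Matrix.nonsing_inv_mul R (Ne.isUnit hRdet)] using this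
    have := hP.dotProduct_mulVec_pos hRx
    calc (0:ℂ) < dotProduct (star (R *ᵥ x)) (P *ᵥ (R *ᵥ x)) := this
      _ = dotProduct (star x) ((R * P * R) *ᵥ x) := by
          simp [Matrix.star_mulVec, hR.eq, Matrix.dotProduct_mulVec, Matrix.vecMul_vecMul,
            mul_assoc]

open scoped MatrixOrder in
lemma exists_sqrt_psd {n : Type*} [Fintype n] [DecidableEq n] {M : Matrix n n ℂ}
    (hM : M.PosSemidef) : ∃ R : Matrix n n ℂ, R.PosSemidef ∧ R * R = M :=
  ⟨CFC.sqrt M, (CFC.sqrt_nonneg M).posSemidef, CFC.sqrt_mul_sqrt_self M hM.nonneg⟩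

theorem itakura_saito_pointwise_nonneg (m : ℕ)
    (P Q : Matrix (Fin m) (Fin m) ℂ)
    (hP : P.PosDef) (hQ : Q.PosDef) :
    0 ≤ (P * Q⁻¹).trace.re - Real.log P.det.re + Real.log Q.det.re - m ∧
    ((P * Q⁻¹).trace.re - Real.log P.det.re + Real.log Q.det.re - m = 0 ↔ P = Q) := by
  classical
  have hQi : (Q⁻¹).PosDef := hQ.inv
  obtain ⟨R, hRps, hRR⟩ := exists_sqrt_psd hQi.posSemidef
  have hQdet : Q.det ≠ 0 := hQ.det_pos.ne'
  have hRdet : R.det ≠ 0 := by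
    have h1 : R.det * R.det = (Q⁻¹).det := by rw [← Matrix.det_mul, hRR]
    have h2 : (Q⁻¹).det ≠ 0 := hQi.det_pos.ne'
    intro h; rw [h, mul_zero] at h1; exact h2 h1.symm
  have hApd : (R * P * R).PosDef := posdef_conj hP hRps.isHermitian hRdet
  set A := R * P * R with hAdef
  set lam := hApd.isHermitian.eigenvalues with hlam
  have hlampos : ∀ i, 0 < lam i := hApd.eigenvalues_pos
  -- trace identity
  have htre : (P * Q⁻¹).trace.re = ∑ i, lam i := by
    have htr : (P * Q⁻¹).trace = A.trace := by
      rw [← hRR, ← mul_assoc, Matrix.trace_mul_cycle]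
    rw [htr, trace_eq_sum_eigs hApd.isHermitian]
    simp; rfl
  -- determinant identities
  have hPc : 0 < P.det.re ∧ P.det.im = 0 := by
    have := hP.det_pos
    rw [Complex.lt_def] at this
    exact ⟨by simpa using this.1, by simpa using this.2.symm⟩
  have hQc : 0 < Q.det.re ∧ Q.det.im = 0 := by
    have := hQ.det_pos
    rw [Complex.lt_def] at this
    exact ⟨by simpa using this.1, by simpa using this.2.symm⟩
  have hPdet : P.det = (P.det.re : ℂ) := by
    rw [Complex.ext_iff]; simp [hPc.2]
  have hQdetc : Q.det = (Q.det.re : ℂ) := by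
    rw [Complex.ext_iff]; simp [hQc.2]
  have hdetA : A.det = ((P.det.re / Q.det.re : ℝ) : ℂ) := by
    have h1 : A.det = P.det * (Q.det)⁻¹ := by
      have h0 : A.det = P.det * ((R * R).det) := by
        rw [hAdef, Matrix.det_mul, Matrix.det_mul, Matrix.det_mul]; ring
      rw [h0, hRR, Matrix.det_nonsing_inv, Ring.inverse_eq_inv]
    have h2 : ((P.det.re / Q.det.re : ℝ) : ℂ) = (P.det.re : ℂ) * ((Q.det.re : ℂ))⁻¹ := by
      push_cast [div_eq_mul_inv]; ring
    rw [h1, h2, ← hPdet, ← hQdetc]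
  have hdetAprod : A.det = ((∏ i, lam i : ℝ) : ℂ) := by
    rw [hApd.isHermitian.det_eq_prod_eigenvalues]
    push_cast
    rfl
  have hprod : ∏ i, lam i = P.det.re / Q.det.re := by
    have := hdetAprod.symm.trans hdetA
    exact_mod_cast this
  have hlogsum : Real.log P.det.re - Real.log Q.det.re = ∑ i, Real.log (lam i) := by
    rw [← Real.log_div hPc.1.ne' hQc.1.ne', ← hprod,
      Real.log_prod (fun i _ => (hlampos i).ne')]
  -- key rewriting
  have hkey : (P * Q⁻¹).trace.re - Real.log P.det.re + Real.log Q.det.re - m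
      = ∑ i, (lam i - Real.log (lam i) - 1) := by
    have hm : ((m : ℝ)) = ∑ _i : Fin m, (1 : ℝ) := by simp
    rw [Finset.sum_sub_distrib, Finset.sum_sub_distrib, htre, ← hlogsum, ← hm]
    ring
  have hterm : ∀ i ∈ (Finset.univ : Finset (Fin m)), 0 ≤ lam i - Real.log (lam i) - 1 := by
    intro i _
    have h := Real.add_one_le_exp (Real.log (lam i))
    rw [Real.exp_log (hlampos i)] at h
    linarith
  refine ⟨hkey ▸ Finset.sum_nonneg hterm, ⟨fun h0 => ?_, fun hPQ => ?_⟩⟩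
  · rw [hkey] at h0
    have hzero := (Finset.sum_eq_zero_iff_of_nonneg hterm).mp h0
    have hlamone : ∀ i, lam i = 1 := by
      intro i
      by_contra hne
      have hlogne : Real.log (lam i) ≠ 0 := by
        intro hl
        have h2 := Real.exp_log (hlampos i)
        rw [hl, Real.exp_zero] at h2
        exact hne h2.symm
      have hlt := Real.add_one_lt_exp hlogne
      rw [Real.exp_log (hlampos i)] at hlt
      have := hzero i (Finset.mem_univ i)
      linarith
    have hA1 : A = 1 := by
      have hsp := hApd.isHermitian.spectral_theorem
      rw [Unitary.conjStarAlgAut_apply] at hsp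
      have hd : (Matrix.diagonal (RCLike.ofReal ∘ hApd.isHermitian.eigenvalues)
          : Matrix (Fin m) (Fin m) ℂ) = 1 := by
        have he : (RCLike.ofReal ∘ hApd.isHermitian.eigenvalues : Fin m → ℂ)
            = fun _ => 1 := funext fun i => by
          have := hlamone i
          simp only [hlam] at this
          simp [Function.comp, this]
        rw [he]
        exact Matrix.diagonal_one
      rw [hd, Matrix.mul_one] at hsp
      rw [hsp, (Matrix.mem_unitaryGroup_iff).mp hApd.isHermitian.eigenvectorUnitary.2]
    have hinvA : R⁻¹ * A * R⁻¹ = P := by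
      rw [hAdef]
      simp only [Matrix.mul_assoc]
      rw [Matrix.mul_nonsing_inv R hRdet.isUnit, Matrix.mul_one, ← Matrix.mul_assoc,
        Matrix.nonsing_inv_mul R hRdet.isUnit, Matrix.one_mul]
    rw [← hinvA, hA1, Matrix.mul_one, ← Matrix.mul_inv_rev, hRR,
      Matrix.nonsing_inv_nonsing_inv Q hQdet.isUnit]
  · rw [hPQ, Matrix.mul_nonsing_inv Q hQdet.isUnit, Matrix.trace_one]
    simp
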